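/- Let k ≥ 1 be an integer, C > 0 and α > 1 real numbers, set s₀ := 3C(k+1), and let T ≥ s₀. Let β : ℝ → ℝ be nonnegative and nondecreasing on [0,T] with β(s₀) ≥ 3C. Assume that for almost every s ∈ (s₀,T), whenever β is differentiable at s with derivative β′(s), one has β(s) ≤ 3C·β′(s)^{α}. Then for every s ∈ [s₀,T] one has β(s) ≥ 3C·{1 + ((α−1)/α)·[s/(3C) − (k+1)]}^{α/(α−1)}. -/

import Mathlib

open MeasureTheory

/-- **Superpolynomial growth estimate (Lemma 3.1 of the paper, power `α > 1`).**
Let `k ≥ 1`, `C > 0`, `α > 1`, set `s₀ := 3C(k+1)`, and let `T ≥ s₀`.  Let `β : ℝ → ℝ` be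
nonnegative and nondecreasing on `[0,T]` with `β(s₀) ≥ 3C`.  If for almost every `s ∈ (s₀,T)`,
whenever `β` is differentiable at `s` with derivative `β′(s)`, one has `β(s) ≤ 3C·β′(s)^α`,
then for every `s ∈ [s₀,T]`,
`β(s) ≥ 3C·(1 + ((α−1)/α)·(s/(3C) − (k+1)))^(α/(α−1))`. -/
theorem growth_estimate_superpolynomial (k : ℕ) (hk : 1 ≤ k) (C α : ℝ) (hC : 0 < C)
    (hα : 1 < α) (T : ℝ) (hT : 3 * C * ((k : ℝ) + 1) ≤ T) (β : ℝ → ℝ)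
    (hnonneg : ∀ s ∈ Set.Icc (0:ℝ) T, 0 ≤ β s)
    (hmono : MonotoneOn β (Set.Icc (0:ℝ) T))
    (hβs₀ : 3 * C ≤ β (3 * C * ((k : ℝ) + 1)))
    (hae : ∀ᵐ s ∂volume, s ∈ Set.Ioo (3 * C * ((k : ℝ) + 1)) T → ∀ d : ℝ, HasDerivAt β d s →
      β s ≤ 3 * C * d ^ α) :
    ∀ s ∈ Set.Icc (3 * C * ((k : ℝ) + 1)) T,
      3 * C * (1 + (α - 1) / α * (s / (3 * C) - ((k : ℝ) + 1))) ^ (α / (α - 1)) ≤ β s := by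
  have hαpos : (0:ℝ) < α := by linarith
  have h3C : (0:ℝ) < 3 * C := by linarith
  set s₀ : ℝ := 3 * C * ((k : ℝ) + 1) with hs₀def
  have hs₀pos : 0 < s₀ := by positivity
  have hT0 : (0:ℝ) ≤ T := hs₀pos.le.trans hT
  have hs₀mem : s₀ ∈ Set.Icc (0:ℝ) T := ⟨hs₀pos.le, hT⟩
  set q : ℝ := (α - 1) / α with hqdef
  have hq0 : 0 < q := div_pos (by linarith) hαpos
  have hq1' : 1 / q = α / (α - 1) := by rw [hqdef, one_div_div]
  have hq1m : q - 1 = -(1/α) := by rw [hqdef]; field_simp; ring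
  -- a global monotone extension of `β`
  set γ : ℝ → ℝ := fun t => β (max 0 (min t T)) with hγdef
  have hmem : ∀ t : ℝ, max 0 (min t T) ∈ Set.Icc (0:ℝ) T := fun t =>
    ⟨le_max_left _ _, max_le hT0 (min_le_right _ _)⟩
  have hγeq : ∀ t ∈ Set.Icc (0:ℝ) T, γ t = β t := by
    intro t ht
    simp only [hγdef]
    rw [min_eq_left ht.2, max_eq_right ht.1]
  have hγmono : Monotone γ := fun a b hab =>
    hmono (hmem a) (hmem b) (max_le_max le_rfl (min_le_min hab le_rfl))
  have hγnonneg : ∀ t, 0 ≤ γ t := fun t => hnonneg _ (hmem t)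
  have hγ3C : ∀ t, s₀ ≤ t → 3 * C ≤ γ t := by
    intro t ht
    calc 3*C ≤ β s₀ := hβs₀
    _ = γ s₀ := (hγeq _ hs₀mem).symm
    _ ≤ γ t := hγmono ht
  have hγpos : ∀ t, s₀ ≤ t → 0 < γ t := fun t ht => lt_of_lt_of_le h3C (hγ3C t ht)
  set G : ℝ → ℝ := fun t => γ t ^ q with hGdef
  have hGmono : Monotone G := fun a b hab =>
    Real.rpow_le_rpow (hγnonneg a) (hγmono hab) hq0.le
  set c : ℝ := q * (3 * C) ^ (q - 1) with hcdef
  have hc : 0 < c := mul_pos hq0 (Real.rpow_pos_of_pos h3C _)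
  intro s hs
  have hsT : s ≤ T := hs.2
  have hs₀s : s₀ ≤ s := hs.1
  have key : G s₀ + c * (s - s₀) ≤ G s := by
    rcases eq_or_lt_of_le hs₀s with h | hlt
    · rw [← h]; simp
    · have main : ∀ a b : ℝ, s₀ < a → a ≤ b → b < s → c * (b - a) ≤ G s - G s₀ := by
        intro a b ha hab hb
        set μ := hGmono.stieltjesFunction.measure with hμ
        have A : ∀ᵐ x ∂volume, x ∈ Set.Ioc a b →
            ENNReal.ofReal c ≤ μ.rnDeriv volume x := by
          filter_upwards [hγmono.ae_hasDerivAt, hGmono.ae_hasDerivAt, hae] with x h1 h2 h3 hx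
          have hxs₀ : s₀ < x := ha.trans_le hx.1.le
          have hxT : x < T := lt_of_le_of_lt hx.2 (hb.trans_le hsT)
          have hxmem : x ∈ Set.Icc (0:ℝ) T := ⟨(hs₀pos.trans hxs₀).le, hxT.le⟩
          set d : ℝ := (Measure.rnDeriv hγmono.stieltjesFunction.measure volume x).toReal with hd
          have hd0 : 0 ≤ d := ENNReal.toReal_nonneg
          have hβev : β =ᶠ[nhds x] γ := by
            filter_upwards [Ioo_mem_nhds (hs₀pos.trans hxs₀) hxT] with y hy
            exact (hγeq y ⟨hy.1.le, hy.2.le⟩).symm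
          have hβd : HasDerivAt β d x := h1.congr_of_eventuallyEq hβev
          have hβx : β x ≤ 3 * C * d ^ α := h3 ⟨hxs₀, hxT⟩ d hβd
          have hγx : γ x = β x := hγeq x hxmem
          have hβxpos : 0 < β x := by rw [← hγx]; exact hγpos x hxs₀.le
          have hdlb : (β x / (3 * C)) ^ (1/α) ≤ d := by
            have h1' : β x / (3*C) ≤ d ^ α := by
              rw [div_le_iff₀ h3C]; linarith
            calc (β x / (3*C)) ^ (1/α) ≤ (d ^ α) ^ (1/α) :=
                  Real.rpow_le_rpow (by positivity) h1' (by positivity)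
              _ = d := by
                  rw [← Real.rpow_mul hd0, mul_one_div_cancel hαpos.ne', Real.rpow_one]
          have hGd : HasDerivAt G (q * γ x ^ (q - 1) * d) x :=
            (Real.hasDerivAt_rpow_const (Or.inl (hγpos x hxs₀.le).ne')).comp x h1
          have hDG : (μ.rnDeriv volume x).toReal = q * γ x ^ (q-1) * d := h2.unique hGd
          have hclb : c ≤ q * γ x ^ (q-1) * d := by
            have e1 : γ x ^ (q - 1) = β x ^ (-(1/α)) := by rw [hγx, hq1m]
            have e3 : (β x / (3*C)) ^ (1/α) = β x ^ (1/α) * (3*C) ^ (-(1/α)) := by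
              rw [Real.div_rpow hβxpos.le h3C.le, Real.rpow_neg h3C.le, div_eq_mul_inv]
            have e4 : β x ^ (1/α) * β x ^ (-(1/α)) = 1 := by
              rw [← Real.rpow_add hβxpos]; simp
            have hb1 : (0:ℝ) ≤ q * β x ^ (-(1/α)) :=
              mul_nonneg hq0.le (Real.rpow_nonneg hβxpos.le _)
            calc c = q * (3*C)^(-(1/α)) := by rw [hcdef, hq1m]
              _ = q * ((β x ^ (1/α) * β x ^ (-(1/α))) * (3*C)^(-(1/α))) := by rw [e4]; ring
              _ = (q * β x ^ (-(1/α))) * ((β x / (3*C)) ^ (1/α)) := by rw [e3]; ring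
              _ ≤ (q * β x ^ (-(1/α))) * d := mul_le_mul_of_nonneg_left hdlb hb1
              _ = q * γ x ^ (q-1) * d := by rw [e1]
          calc ENNReal.ofReal c ≤ ENNReal.ofReal ((μ.rnDeriv volume x).toReal) :=
                ENNReal.ofReal_le_ofReal (by rw [hDG]; exact hclb)
            _ ≤ μ.rnDeriv volume x := ENNReal.ofReal_toReal_le
        have L1 : ENNReal.ofReal c * volume (Set.Ioc a b)
            ≤ ∫⁻ x in Set.Ioc a b, μ.rnDeriv volume x ∂volume := by
          rw [← MeasureTheory.setLIntegral_const]
          exact MeasureTheory.lintegral_mono_ae ((ae_restrict_iff' measurableSet_Ioc).2 A)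
        have L2 : (∫⁻ x in Set.Ioc a b, μ.rnDeriv volume x ∂volume) ≤ μ (Set.Ioc a b) :=
          Measure.setLIntegral_rnDeriv_le _
        have L3 : μ (Set.Ioc a b)
            = ENNReal.ofReal (hGmono.stieltjesFunction b - hGmono.stieltjesFunction a) :=
          StieltjesFunction.measure_Ioc _ a b
        have L4 : hGmono.stieltjesFunction b - hGmono.stieltjesFunction a ≤ G s - G s₀ := by
          have hb' : hGmono.stieltjesFunction b ≤ G s := by
            rw [Monotone.stieltjesFunction_eq]; exact hGmono.rightLim_le hb
          have ha' : G s₀ ≤ hGmono.stieltjesFunction a := by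
            rw [Monotone.stieltjesFunction_eq]; exact hGmono.le_rightLim ha.le
          linarith
        have hfin : ENNReal.ofReal (c * (b - a)) ≤ ENNReal.ofReal (G s - G s₀) := by
          calc ENNReal.ofReal (c * (b-a)) = ENNReal.ofReal c * ENNReal.ofReal (b-a) :=
                ENNReal.ofReal_mul hc.le
            _ = ENNReal.ofReal c * volume (Set.Ioc a b) := by rw [Real.volume_Ioc]
            _ ≤ μ (Set.Ioc a b) := L1.trans L2
            _ = ENNReal.ofReal (hGmono.stieltjesFunction b - hGmono.stieltjesFunction a) := L3
            _ ≤ ENNReal.ofReal (G s - G s₀) := ENNReal.ofReal_le_ofReal L4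
        exact (ENNReal.ofReal_le_ofReal_iff (sub_nonneg.2 (hGmono hs₀s))).1 hfin
      refine le_of_forall_pos_le_add ?_
      intro ε hε
      set δ : ℝ := min ((s - s₀)/3) (ε / (2*c)) with hδ
      have hδpos : 0 < δ := lt_min (by linarith) (by positivity)
      have hδ1 : δ ≤ (s - s₀)/3 := min_le_left _ _
      have hδ2 : δ ≤ ε/(2*c) := min_le_right _ _
      have h1 : s₀ < s₀ + δ := by linarith
      have h2 : s₀ + δ ≤ s - δ := by linarith
      have h3 : s - δ < s := by linarith
      have hmain := main (s₀+δ) (s-δ) h1 h2 h3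
      have hδε : 2 * c * δ ≤ ε := by
        have h2c : (0:ℝ) < 2*c := by linarith
        calc 2*c*δ ≤ 2*c*(ε/(2*c)) := mul_le_mul_of_nonneg_left hδ2 h2c.le
          _ = ε := by field_simp
      nlinarith [hmain]
  -- final algebra
  have hsmem : s ∈ Set.Icc (0:ℝ) T := ⟨hs₀pos.le.trans hs₀s, hsT⟩
  set X : ℝ := 1 + q * (s / (3 * C) - ((k:ℝ)+1)) with hX
  have hXq : X = 1 + q * (s - s₀)/(3*C) := by
    rw [hX, hs₀def]; field_simp
  have hX1 : 1 ≤ X := by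
    rw [hXq]
    have h0 : 0 ≤ q*(s-s₀)/(3*C) := by
      apply div_nonneg _ h3C.le
      exact mul_nonneg hq0.le (by linarith)
    linarith
  have hX0 : 0 ≤ X := by linarith
  have step1 : (3*C)^q * X ≤ G s := by
    have e : (3*C)^q * X = (3*C)^q + c * (s - s₀) := by
      rw [hXq, hcdef]
      have hrw : (3*C)^(q-1) = (3*C)^q / (3*C) := by
        rw [Real.rpow_sub h3C, Real.rpow_one]
      rw [hrw]; field_simp
    rw [e]
    have hG0 : (3*C)^q ≤ G s₀ := by
      have : G s₀ = β s₀ ^ q := by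
        simp only [hGdef]; rw [hγeq _ hs₀mem]
      rw [this]
      exact Real.rpow_le_rpow h3C.le hβs₀ hq0.le
    linarith
  have hGs : G s = β s ^ q := by simp only [hGdef]; rw [hγeq s hsmem]
  have hβsnn : 0 ≤ β s := hnonneg s hsmem
  calc 3*C * X ^ (α/(α-1)) = ((3*C)^q * X) ^ (1/q) := by
        rw [← hq1', Real.mul_rpow (Real.rpow_nonneg h3C.le _) hX0,
          ← Real.rpow_mul h3C.le, mul_one_div_cancel hq0.ne', Real.rpow_one]
    _ ≤ (G s) ^ (1/q) := by
        apply Real.rpow_le_rpow _ step1 (by positivity)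
        exact mul_nonneg (Real.rpow_nonneg h3C.le _) hX0
    _ = β s := by
        rw [hGs, ← Real.rpow_mul hβsnn, mul_one_div_cancel hq0.ne', Real.rpow_one]
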